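/- For all integers n, m, t with n ≥ m ≥ t ≥ 2, the minimum size of a covering design satisfies C(n,m,t) < ((n/m) · ((n−t+1)/(m−t+1)))^{t/2} · min{1 + t + t·log(m/t), 1 + m·log 2, 1 + t·log m} + 1, where log denotes the natural logarithm. -/

import Mathlib

/-- An `(n,m,t)`-covering design of size `k`. -/
def IsCoveringDesign (n m t k : ℕ) (S : Fin k → Finset (Fin n)) : Prop :=
  (∀ i, (S i).card = m) ∧ ∀ T : Finset (Fin n), T.card ≤ t → ∃ i, T ⊆ S i

/-- `C(n,m,t)`: the minimum size of an `(n,m,t)`-covering design. -/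
noncomputable def coveringNumber (n m t : ℕ) : ℕ :=
  sInf {k : ℕ | ∃ S : Fin k → Finset (Fin n), IsCoveringDesign n m t k S}

/-- Number of `m`-subsets of `Fin n` containing a fixed `t`-set. -/
lemma card_supersets {n m t : ℕ} (htm : t ≤ m) (T : Finset (Fin n)) (hT : T.card = t) :
    ((Finset.univ.powersetCard m).filter (fun A => T ⊆ A)).card = (n - t).choose (m - t) := by
  classical
  have hTc : Tᶜ.card = n - t := by rw [Finset.card_compl, hT, Fintype.card_fin]
  rw [← hTc, ← Finset.card_powersetCard (m - t) Tᶜ]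
  refine Finset.card_nbij' (fun A => A \ T) (fun C => C ∪ T) ?_ ?_ ?_ ?_
  · intro A hA
    simp only [Finset.mem_coe, Finset.mem_filter, Finset.mem_powersetCard_univ] at hA
    rw [Finset.mem_coe, Finset.mem_powersetCard]
    refine ⟨fun x hx => ?_, ?_⟩
    · simp only [Finset.mem_sdiff] at hx
      simp [Finset.mem_compl, hx.2]
    · rw [Finset.card_sdiff_of_subset hA.2, hA.1, hT]
  · intro C hC
    rw [Finset.mem_coe, Finset.mem_powersetCard] at hC
    have hdisj : Disjoint C T := by
      refine Finset.disjoint_left.2 fun x hx hxT => ?_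
      have := hC.1 hx
      simp [Finset.mem_compl] at this
      exact this hxT
    simp only [Finset.mem_coe, Finset.mem_filter, Finset.mem_powersetCard_univ]
    constructor
    · rw [Finset.card_union_of_disjoint hdisj, hC.2, hT]
      omega
    · exact Finset.subset_union_right
  · intro A hA
    simp only [Finset.mem_coe, Finset.mem_filter] at hA
    exact Finset.sdiff_union_of_subset hA.2
  · intro C hC
    rw [Finset.mem_coe, Finset.mem_powersetCard] at hC
    have hdisj : Disjoint C T := by
      refine Finset.disjoint_left.2 fun x hx hxT => ?_
      have := hC.1 hx
      simp [Finset.mem_compl] at this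
      exact this hxT
    simp only []
    rw [Finset.union_sdiff_distrib, Finset.sdiff_self, Finset.union_empty,
      Finset.sdiff_eq_self_of_disjoint hdisj]

lemma exists_greedy {n m t : ℕ} (htm : t ≤ m) (hmn : m ≤ n)
    (U : Finset (Finset (Fin n))) (hU : ∀ T ∈ U, T.card = t) :
    ∃ A : Finset (Fin n), A.card = m ∧
      U.card * (n - t).choose (m - t) ≤ n.choose m * (U.filter (fun T => T ⊆ A)).card := by
  classical
  have hne : (Finset.univ.powersetCard m : Finset (Finset (Fin n))).Nonempty := by
    obtain ⟨A, _, hA⟩ := Finset.exists_subset_card_eq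
      (show m ≤ (Finset.univ : Finset (Fin n)).card by simpa using hmn)
    exact ⟨A, Finset.mem_powersetCard_univ.2 hA⟩
  obtain ⟨A, hA, hmax⟩ := Finset.exists_max_image (Finset.univ.powersetCard m)
    (fun A => (U.filter (fun T => T ⊆ A)).card) hne
  refine ⟨A, Finset.mem_powersetCard_univ.1 hA, ?_⟩
  have hdc : ∑ A' ∈ Finset.univ.powersetCard m, (U.filter (fun T => T ⊆ A')).card
      = U.card * (n - t).choose (m - t) := by
    have h1 : ∀ A' : Finset (Fin n), (U.filter (fun T => T ⊆ A')).card
        = ∑ T ∈ U, if T ⊆ A' then 1 else 0 := by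
      intro A'; rw [Finset.card_filter]
    simp only [h1]
    rw [Finset.sum_comm]
    have h2 : ∀ T ∈ U, (∑ A' ∈ Finset.univ.powersetCard m, if T ⊆ A' then 1 else 0)
        = (n - t).choose (m - t) := by
      intro T hT
      rw [← Finset.card_filter, card_supersets htm T (hU T hT)]
    rw [Finset.sum_congr rfl h2, Finset.sum_const, smul_eq_mul]
  calc U.card * (n - t).choose (m - t)
      = ∑ A' ∈ Finset.univ.powersetCard m, (U.filter (fun T => T ⊆ A')).card := hdc.symm
    _ ≤ (Finset.univ.powersetCard m).card • (U.filter (fun T => T ⊆ A)).card :=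
        Finset.sum_le_card_nsmul _ _ _ fun A' hA' => hmax A' hA'
    _ = n.choose m * (U.filter (fun T => T ⊆ A)).card := by
        rw [smul_eq_mul, Finset.card_powersetCard, Finset.card_univ, Fintype.card_fin]

lemma cover_exists {n m t : ℕ} (htm : t ≤ m) (hmn : m ≤ n) (k : ℕ) :
    ∀ U : Finset (Finset (Fin n)), (∀ T ∈ U, T.card = t) →
    ∀ r : ℕ, (U.card : ℝ) * (1 - (m.choose t : ℝ) / (n.choose t : ℝ)) ^ k ≤ r →
    ∃ S : Finset (Finset (Fin n)), (∀ A ∈ S, A.card = m) ∧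
      (∀ T ∈ U, ∃ A ∈ S, T ⊆ A) ∧ S.card ≤ k + r := by
  classical
  have htn : t ≤ n := htm.trans hmn
  have hN0 : 0 < (n.choose t : ℝ) := by exact_mod_cast Nat.choose_pos htn
  have hB0 : 0 < (m.choose t : ℝ) := by exact_mod_cast Nat.choose_pos htm
  have hBN : (m.choose t : ℝ) ≤ (n.choose t : ℝ) := by
    exact_mod_cast Nat.choose_le_choose t hmn
  set p : ℝ := (m.choose t : ℝ) / (n.choose t : ℝ) with hp
  have hp0 : 0 < p := div_pos hB0 hN0
  have hp1 : p ≤ 1 := div_le_one_of_le₀ hBN hN0.le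
  induction k with
  | zero =>
    intro U hU r hr
    simp only [pow_zero, mul_one] at hr
    have hUr : U.card ≤ r := by exact_mod_cast hr
    have hext : ∀ T : {T // T ∈ U}, ∃ A : Finset (Fin n), T.1 ⊆ A ∧ A.card = m := by
      intro ⟨T, hT⟩
      have hTm : T.card ≤ m := by rw [hU T hT]; exact htm
      obtain ⟨A, h1, _, h3⟩ := Finset.exists_subsuperset_card_eq (Finset.subset_univ T)
        hTm (by simpa using hmn)
      exact ⟨A, h1, h3⟩
    refine ⟨U.attach.image fun T => (hext T).choose, ?_, ?_, ?_⟩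
    · intro A hA
      obtain ⟨T, _, rfl⟩ := Finset.mem_image.1 hA
      exact (hext T).choose_spec.2
    · intro T hT
      exact ⟨(hext ⟨T, hT⟩).choose,
        Finset.mem_image_of_mem _ (Finset.mem_attach _ _), (hext ⟨T, hT⟩).choose_spec.1⟩
    · calc (U.attach.image fun T => (hext T).choose).card ≤ U.attach.card :=
            Finset.card_image_le
        _ = U.card := Finset.card_attach
        _ ≤ 0 + r := by omega
  | succ k ih =>
    intro U hU r hr
    rcases eq_or_ne U ∅ with rfl | hUe
    · exact ⟨∅, by simp, by simp, by simp⟩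
    obtain ⟨A, hAcard, hAc⟩ := exists_greedy htm hmn U hU
    set U' := U.filter (fun T => ¬ T ⊆ A) with hU'
    have hcard' : (U'.card : ℝ) ≤ U.card * (1 - p) := by
      have hsplit : (U.filter (fun T => T ⊆ A)).card + U'.card = U.card := by
        rw [hU']
        exact Finset.card_filter_add_card_filter_not _
      -- p * U.card ≤ covered
      have hM0 : 0 < (n.choose m : ℝ) := by exact_mod_cast Nat.choose_pos hmn
      have hchoose : (n.choose m : ℝ) * (m.choose t : ℝ)
          = (n.choose t : ℝ) * ((n - t).choose (m - t) : ℝ) := by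
        exact_mod_cast congrArg (Nat.cast (R := ℝ)) (Nat.choose_mul (n := n) htm)
      have hcov : p * U.card ≤ ((U.filter (fun T => T ⊆ A)).card : ℝ) := by
        have h1 : (U.card : ℝ) * ((n - t).choose (m - t) : ℝ)
            ≤ (n.choose m : ℝ) * ((U.filter (fun T => T ⊆ A)).card : ℝ) := by
          exact_mod_cast hAc
        rw [hp, div_mul_eq_mul_div, div_le_iff₀ hN0]
        have h3 : (U.card : ℝ) * ((n.choose m : ℝ) * (m.choose t : ℝ))
            = (U.card : ℝ) * ((n.choose t : ℝ) * ((n - t).choose (m - t) : ℝ)) := by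
          rw [hchoose]
        have h4 := mul_le_mul_of_nonneg_left h1 hN0.le
        have h5 : ((m.choose t : ℝ) * U.card) * (n.choose m : ℝ)
            ≤ (((U.filter (fun T => T ⊆ A)).card : ℝ) * (n.choose t : ℝ)) * (n.choose m : ℝ) := by
          nlinarith [h3, h4]
        exact le_of_mul_le_mul_right h5 hM0
      have hsplitR : ((U.filter (fun T => T ⊆ A)).card : ℝ) + (U'.card : ℝ) = U.card := by
        exact_mod_cast congrArg (Nat.cast (R := ℝ)) hsplit
      nlinarith [hcov, hsplitR]
    have hr' : (U'.card : ℝ) * (1 - p) ^ k ≤ r := by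
      calc (U'.card : ℝ) * (1 - p) ^ k
          ≤ (U.card * (1 - p)) * (1 - p) ^ k :=
            mul_le_mul_of_nonneg_right hcard' (pow_nonneg (by linarith) k)
        _ = (U.card : ℝ) * (1 - p) ^ (k + 1) := by ring
        _ ≤ r := hr
    obtain ⟨S', hS'card, hS'cover, hS'size⟩ := ih U'
      (fun T hT => hU T (Finset.filter_subset _ _ hT)) r hr'
    refine ⟨insert A S', ?_, ?_, ?_⟩
    · intro A' hA'
      rcases Finset.mem_insert.1 hA' with rfl | h
      · exact hAcard
      · exact hS'card A' h
    · intro T hT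
      by_cases hTA : T ⊆ A
      · exact ⟨A, Finset.mem_insert_self _ _, hTA⟩
      · obtain ⟨A', hA', hTA'⟩ := hS'cover T (Finset.mem_filter.2 ⟨hT, hTA⟩)
        exact ⟨A', Finset.mem_insert_of_mem hA', hTA'⟩
    · calc (insert A S').card ≤ S'.card + 1 := Finset.card_insert_le _ _
        _ ≤ (k + 1) + r := by omega

lemma coveringNumber_le {n m t : ℕ} (htm : t ≤ m) (hmn : m ≤ n) (k r : ℕ)
    (hr : (n.choose t : ℝ) * (1 - (m.choose t : ℝ) / (n.choose t : ℝ)) ^ k ≤ r) :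
    coveringNumber n m t ≤ k + r := by
  classical
  have hcardU : ((Finset.univ.powersetCard t : Finset (Finset (Fin n))).card : ℝ)
      = (n.choose t : ℝ) := by
    rw [Finset.card_powersetCard, Finset.card_univ, Fintype.card_fin]
  obtain ⟨S, hScard, hScover, hSsize⟩ := cover_exists htm hmn k
    (Finset.univ.powersetCard t) (fun T hT => Finset.mem_powersetCard_univ.1 hT) r
    (by rw [hcardU]; exact hr)
  have hdesign : IsCoveringDesign n m t S.card fun i => (S.equivFin.symm i : Finset (Fin n)) := by
    constructor
    · intro i
      exact hScard _ (S.equivFin.symm i).2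
    · intro T hT
      have hTn : T.card ≤ t := hT
      obtain ⟨T', hTT', _, hT'⟩ := Finset.exists_subsuperset_card_eq (Finset.subset_univ T) hTn
        (by simpa using htm.trans hmn)
      obtain ⟨A, hA, hT'A⟩ := hScover T' (Finset.mem_powersetCard_univ.2 hT')
      refine ⟨S.equivFin ⟨A, hA⟩, ?_⟩
      simpa using hTT'.trans hT'A
  calc coveringNumber n m t ≤ S.card := Nat.sInf_le ⟨_, hdesign⟩
    _ ≤ k + r := hSsize

lemma pow_self_le_factorial_mul_exp (t : ℕ) (ht : 1 ≤ t) :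
    (t : ℝ) ^ t ≤ (t.factorial : ℝ) * Real.exp ((t : ℝ) - 1) := by
  induction t with
  | zero => omega
  | succ s ih =>
    rcases Nat.eq_or_lt_of_le ht with h | h
    · simp [← h]
    have hs : 1 ≤ s := by omega
    have ihs := ih hs
    have hs0 : (0:ℝ) < s := by exact_mod_cast hs
    have hkey : ((s:ℝ) + 1) ^ s ≤ (s:ℝ) ^ s * Real.exp 1 := by
      have h1 : (1 : ℝ) + 1 / s ≤ Real.exp (1 / s) := by
        have := Real.add_one_le_exp (1 / (s:ℝ))
        linarith
      have h2 : ((1:ℝ) + 1 / s) ^ s ≤ Real.exp (1 / (s:ℝ)) ^ s :=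
        pow_le_pow_left₀ (by positivity) h1 s
      have h3 : Real.exp (1 / (s:ℝ)) ^ s = Real.exp 1 := by
        rw [← Real.exp_nat_mul]
        congr 1
        field_simp
      have h4 : ((s:ℝ) + 1) ^ s = (s:ℝ) ^ s * ((1:ℝ) + 1 / s) ^ s := by
        rw [← mul_pow]
        congr 1
        field_simp
      calc ((s:ℝ)+1) ^ s = (s:ℝ) ^ s * ((1:ℝ) + 1/s) ^ s := h4
        _ ≤ (s:ℝ)^s * Real.exp 1 := by
            rw [← h3]
            exact mul_le_mul_of_nonneg_left h2 (by positivity)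
    have hfact : ((s+1).factorial : ℝ) = ((s:ℝ) + 1) * (s.factorial : ℝ) := by
      rw [Nat.factorial_succ]; push_cast; ring
    have hcast : ((s+1 : ℕ) : ℝ) = (s:ℝ) + 1 := by push_cast; ring
    rw [hcast, hfact]
    have hexp : Real.exp ((s:ℝ) + 1 - 1) = Real.exp ((s:ℝ) - 1) * Real.exp 1 := by
      rw [← Real.exp_add]; ring_nf
    calc ((s:ℝ) + 1) ^ (s + 1) = ((s:ℝ)+1) * ((s:ℝ)+1) ^ s := by ring
      _ ≤ ((s:ℝ)+1) * ((s:ℝ) ^ s * Real.exp 1) :=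
          mul_le_mul_of_nonneg_left hkey (by positivity)
      _ ≤ ((s:ℝ)+1) * ((s.factorial : ℝ) * Real.exp ((s:ℝ)-1) * Real.exp 1) := by
          have h5 := mul_le_mul_of_nonneg_right ihs (Real.exp_pos 1).le
          nlinarith [Real.exp_pos (1:ℝ)]
      _ = ((s:ℝ) + 1) * (s.factorial : ℝ) * Real.exp ((s:ℝ) + 1 - 1) := by
          rw [hexp]; ring

lemma choose_le_two_pow' (M j : ℕ) : M.choose j ≤ 2 ^ M := by
  rcases le_or_gt j M with h | h
  · calc M.choose j ≤ ∑ i ∈ Finset.range (M+1), M.choose i :=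
        Finset.single_le_sum (fun i _ => Nat.zero_le _) (Finset.mem_range.2 (by omega))
      _ = 2 ^ M := Nat.sum_range_choose M
  · rw [Nat.choose_eq_zero_of_lt h]; exact Nat.zero_le _

lemma two_mul_choose_le_two_pow {m t : ℕ} (ht : 1 ≤ t) (htm : t ≤ m) :
    2 * m.choose t ≤ 2 ^ m := by
  obtain ⟨s, rfl⟩ : ∃ s, t = s + 1 := ⟨t - 1, by omega⟩
  obtain ⟨M, rfl⟩ : ∃ M, m = M + 1 := ⟨m - 1, by omega⟩
  rw [Nat.choose_succ_succ]
  have hsum : M.choose s + M.choose (s+1) ≤ 2 ^ M := by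
    rcases le_or_gt (s+1) M with h | h
    · calc M.choose s + M.choose (s+1)
          = ∑ i ∈ ({s, s+1} : Finset ℕ), M.choose i := by
            rw [Finset.sum_pair (by omega)]
        _ ≤ ∑ i ∈ Finset.range (M+1), M.choose i := by
            apply Finset.sum_le_sum_of_subset
            intro i hi
            simp only [Finset.mem_insert, Finset.mem_singleton] at hi
            rcases hi with rfl | rfl <;> exact Finset.mem_range.2 (by omega)
        _ = 2 ^ M := Nat.sum_range_choose M
    · rw [Nat.choose_eq_zero_of_lt h, Nat.add_zero]
      exact choose_le_two_pow' M s
  calc 2 * (M.choose s + M.choose (s+1)) ≤ 2 * 2 ^ M := by omega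
    _ = 2 ^ (M+1) := by ring

lemma log_choose_bounds {m t : ℕ} (ht : 2 ≤ t) (htm : t ≤ m) :
    Real.log (m.choose t) + 3/2 ≤
      min (1 + (t : ℝ) + (t : ℝ) * Real.log ((m : ℝ) / (t : ℝ)))
        (min (1 + (m : ℝ) * Real.log 2) (1 + (t : ℝ) * Real.log (m : ℝ))) := by
  have ht0 : (0:ℝ) < t := by exact_mod_cast (by omega : 0 < t)
  have hm0 : (0:ℝ) < m := by exact_mod_cast (by omega : 0 < m)
  have hB0 : (0:ℝ) < (m.choose t : ℝ) := by exact_mod_cast Nat.choose_pos htm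
  have hdfle : (m.choose t : ℝ) * (t.factorial : ℝ) ≤ (m:ℝ) ^ t := by
    have h := Nat.descFactorial_le_pow m t
    rw [Nat.descFactorial_eq_factorial_mul_choose] at h
    exact_mod_cast by linarith [ (by exact_mod_cast h : ((t.factorial * m.choose t : ℕ) : ℝ) ≤ ((m ^ t : ℕ) : ℝ)) ]
  have hfac2 : (2:ℝ) ≤ (t.factorial : ℝ) := by
    exact_mod_cast Nat.factorial_le ht
  have hlog2 : (1:ℝ)/2 ≤ Real.log 2 := by
    have := Real.log_two_gt_d9
    linarith
  -- (b)(c): 2 * B ≤ m ^ t  and 2 * B ≤ 2 ^ m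
  have h2Bmt : 2 * (m.choose t : ℝ) ≤ (m:ℝ) ^ t := by nlinarith
  have h2B2m : 2 * (m.choose t : ℝ) ≤ (2:ℝ) ^ m := by
    exact_mod_cast two_mul_choose_le_two_pow (by omega) htm
  have hlogBmt : Real.log 2 + Real.log (m.choose t) ≤ (t:ℝ) * Real.log m := by
    have := Real.log_le_log (by positivity) h2Bmt
    rwa [Real.log_mul (by norm_num) hB0.ne', Real.log_pow] at this
  have hlogB2m : Real.log 2 + Real.log (m.choose t) ≤ (m:ℝ) * Real.log 2 := by
    have := Real.log_le_log (by positivity) h2B2m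
    rwa [Real.log_mul (by norm_num) hB0.ne', Real.log_pow] at this
  -- (a)
  have hfpos : (0:ℝ) < (t.factorial : ℝ) := by linarith
  have hfac : (t:ℝ) ^ t ≤ (t.factorial : ℝ) * Real.exp ((t:ℝ) - 1) :=
    pow_self_le_factorial_mul_exp t (by omega)
  have hBtt : (m.choose t : ℝ) * (t:ℝ) ^ t ≤ (m:ℝ) ^ t * Real.exp ((t:ℝ) - 1) := by
    calc (m.choose t : ℝ) * (t:ℝ) ^ t
        ≤ (m.choose t : ℝ) * ((t.factorial : ℝ) * Real.exp ((t:ℝ) - 1)) :=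
          mul_le_mul_of_nonneg_left hfac hB0.le
      _ = ((m.choose t : ℝ) * (t.factorial : ℝ)) * Real.exp ((t:ℝ) - 1) := by ring
      _ ≤ (m:ℝ) ^ t * Real.exp ((t:ℝ) - 1) :=
          mul_le_mul_of_nonneg_right hdfle (Real.exp_pos _).le
  have hlogBa : Real.log (m.choose t) + (t:ℝ) * Real.log t
      ≤ (t:ℝ) * Real.log m + ((t:ℝ) - 1) := by
    have := Real.log_le_log (by positivity) hBtt
    rwa [Real.log_mul hB0.ne' (by positivity), Real.log_pow,
      Real.log_mul (by positivity) (Real.exp_pos _).ne', Real.log_pow, Real.log_exp] at this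
  have hlogdiv : Real.log ((m:ℝ) / (t:ℝ)) = Real.log m - Real.log t :=
    Real.log_div hm0.ne' ht0.ne'
  refine le_min ?_ (le_min ?_ ?_)
  · nlinarith [hlogBa, hlogdiv]
  · linarith
  · linarith

lemma choose_ratio_le {n m t : ℕ} (ht : 2 ≤ t) (htm : t ≤ m) (hmn : m ≤ n) :
    (n.choose t : ℝ) / (m.choose t : ℝ) ≤
      ((n : ℝ) / (m : ℝ) * (((n : ℝ) - (t : ℝ) + 1) / ((m : ℝ) - (t : ℝ) + 1)))
        ^ ((t : ℝ) / 2) := by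
  have htn : t ≤ n := htm.trans hmn
  have hm0 : (0:ℝ) < m := by exact_mod_cast (by omega : 0 < m)
  have hmt1 : (0:ℝ) < (m:ℝ) - t + 1 := by
    have : (t:ℝ) ≤ m := by exact_mod_cast htm
    linarith
  have hnt1 : (0:ℝ) < (n:ℝ) - t + 1 := by
    have : (t:ℝ) ≤ n := by exact_mod_cast htn
    linarith
  have hmn' : (m:ℝ) ≤ n := by exact_mod_cast hmn
  set Q : ℝ := (n : ℝ) / (m : ℝ) * (((n : ℝ) - (t : ℝ) + 1) / ((m : ℝ) - (t : ℝ) + 1)) with hQ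
  have hQ0 : 0 ≤ Q := by positivity
  set R : ℝ := (n.choose t : ℝ) / (m.choose t : ℝ) with hR
  have hB0 : (0:ℝ) < (m.choose t : ℝ) := by exact_mod_cast Nat.choose_pos htm
  have hR0 : 0 ≤ R := by positivity
  -- descFactorial products
  have hdn : (n.descFactorial t : ℝ) = ∏ i ∈ Finset.range t, ((n:ℝ) - i) := by
    rw [Nat.descFactorial_eq_prod_range]
    push_cast [Nat.cast_prod]
    refine Finset.prod_congr rfl fun i hi => ?_
    have : i ≤ n := by have := Finset.mem_range.1 hi; omega
    rw [Nat.cast_sub this]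
  have hdm : (m.descFactorial t : ℝ) = ∏ i ∈ Finset.range t, ((m:ℝ) - i) := by
    rw [Nat.descFactorial_eq_prod_range]
    push_cast [Nat.cast_prod]
    refine Finset.prod_congr rfl fun i hi => ?_
    have : i ≤ m := by have := Finset.mem_range.1 hi; omega
    rw [Nat.cast_sub this]
  have hfac0 : (0:ℝ) < (t.factorial : ℝ) := by exact_mod_cast t.factorial_pos
  have hRdf : R = (n.descFactorial t : ℝ) / (m.descFactorial t : ℝ) := by
    rw [hR, Nat.descFactorial_eq_factorial_mul_choose, Nat.descFactorial_eq_factorial_mul_choose]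
    push_cast
    rw [mul_div_mul_left _ _ hfac0.ne']
  -- pointwise positivity of factors
  have hbpos : ∀ i ∈ Finset.range t, (0:ℝ) < (m:ℝ) - i := by
    intro i hi
    have hi' : (i:ℝ) < t := by exact_mod_cast Finset.mem_range.1 hi
    have : (t:ℝ) ≤ m := by exact_mod_cast htm
    linarith
  have hapos : ∀ i ∈ Finset.range t, (0:ℝ) < (n:ℝ) - i := by
    intro i hi
    have hi' : (i:ℝ) < t := by exact_mod_cast Finset.mem_range.1 hi
    have : (t:ℝ) ≤ n := by exact_mod_cast htn
    linarith
  -- R^2 ≤ Q^t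
  have hsq : R ^ 2 ≤ Q ^ t := by
    have hreflectn : ∏ i ∈ Finset.range t, ((n:ℝ) - i)
        = ∏ i ∈ Finset.range t, ((n:ℝ) - (t - 1 - i : ℕ)) :=
      (Finset.prod_range_reflect (fun i => (n:ℝ) - i) t).symm
    have hreflectm : ∏ i ∈ Finset.range t, ((m:ℝ) - i)
        = ∏ i ∈ Finset.range t, ((m:ℝ) - (t - 1 - i : ℕ)) :=
      (Finset.prod_range_reflect (fun i => (m:ℝ) - i) t).symm
    have hR2 : R ^ 2 = ∏ i ∈ Finset.range t,
        (((n:ℝ) - i) * ((n:ℝ) - (t - 1 - i : ℕ))) /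
        (((m:ℝ) - i) * ((m:ℝ) - (t - 1 - i : ℕ))) := by
      rw [hRdf, hdn, hdm, div_pow, sq, sq]
      symm
      rw [Finset.prod_div_distrib, Finset.prod_mul_distrib, Finset.prod_mul_distrib, ← hreflectn, ← hreflectm]
    rw [hR2]
    calc ∏ i ∈ Finset.range t,
          (((n:ℝ) - i) * ((n:ℝ) - (t - 1 - i : ℕ))) /
          (((m:ℝ) - i) * ((m:ℝ) - (t - 1 - i : ℕ)))
        ≤ ∏ _i ∈ Finset.range t, Q := by
          refine Finset.prod_le_prod (fun i hi => ?_) (fun i hi => ?_)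
          · have h1 := hapos i hi
            have h2 := hapos (t - 1 - i) (Finset.mem_range.2 (by
              have := Finset.mem_range.1 hi; omega))
            have h3 := hbpos i hi
            have h4 := hbpos (t - 1 - i) (Finset.mem_range.2 (by
              have := Finset.mem_range.1 hi; omega))
            positivity
          · have hi' := Finset.mem_range.1 hi
            have hc : ((t - 1 - i : ℕ) : ℝ) = (t:ℝ) - 1 - (i:ℝ) := by
              rw [Nat.cast_sub (by omega), Nat.cast_sub (by omega), Nat.cast_one]
            have hι0 : (0:ℝ) ≤ (i:ℝ) := by positivity
            have hι1 : (i:ℝ) ≤ (t:ℝ) - 1 := by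
              have : (i:ℝ) + 1 ≤ (t:ℝ) := by exact_mod_cast hi'
              linarith
            have h3 := hbpos i hi
            have h4 := hbpos (t - 1 - i) (Finset.mem_range.2 (by omega))
            rw [hc] at h4 ⊢
            have hQdiv : Q = ((n:ℝ) * ((n:ℝ) - t + 1)) / ((m:ℝ) * ((m:ℝ) - t + 1)) := by
              rw [hQ, div_mul_div_comm]
            rw [hQdiv, div_le_div_iff₀ (by positivity) (by positivity)]
            have hkey : (0:ℝ) ≤ (i:ℝ) * ((t:ℝ) - 1 - i) *
                ((n:ℝ) * ((n:ℝ) - t + 1) - (m:ℝ) * ((m:ℝ) - t + 1)) := by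
              apply mul_nonneg (mul_nonneg hι0 (by linarith))
              have htr : (t:ℝ) ≤ m := by exact_mod_cast htm
              nlinarith
            have hid : ((n:ℝ) - i) * ((n:ℝ) - ((t:ℝ) - 1 - i)) * ((m:ℝ) * ((m:ℝ) - t + 1))
                + (i:ℝ) * ((t:ℝ) - 1 - i) *
                  ((n:ℝ) * ((n:ℝ) - t + 1) - (m:ℝ) * ((m:ℝ) - t + 1))
                = (n:ℝ) * ((n:ℝ) - t + 1) * (((m:ℝ) - i) * ((m:ℝ) - ((t:ℝ) - 1 - i))) := by
              ring
            linarith [hkey, hid]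
      _ = Q ^ t := by rw [Finset.prod_const, Finset.card_range]
  have h1 : Q ^ ((t:ℝ)/2) = Real.sqrt (Q ^ t) := by
    rw [show (t:ℝ)/2 = (t:ℝ) * (1/2) by ring, Real.rpow_mul hQ0, Real.rpow_natCast,
      Real.sqrt_eq_rpow]
  have h2 : R = Real.sqrt (R ^ 2) := (Real.sqrt_sq hR0).symm
  calc R = Real.sqrt (R ^ 2) := h2
    _ ≤ Real.sqrt (Q ^ t) := Real.sqrt_le_sqrt hsq
    _ = Q ^ ((t:ℝ)/2) := h1.symm

/-- `C(n,m,t) < ((n/m)·((n−t+1)/(m−t+1)))^{t/2} ·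
  min{1 + t + t·log(m/t), 1 + m·log 2, 1 + t·log m} + 1`. -/
theorem coveringNumber_upper_bound (n m t : ℕ) (ht : 2 ≤ t) (htm : t ≤ m) (hmn : m ≤ n) :
    (coveringNumber n m t : ℝ) <
      ((n : ℝ) / (m : ℝ) * (((n : ℝ) - (t : ℝ) + 1) / ((m : ℝ) - (t : ℝ) + 1)))
          ^ ((t : ℝ) / 2) *
        min (1 + (t : ℝ) + (t : ℝ) * Real.log ((m : ℝ) / (t : ℝ)))
          (min (1 + (m : ℝ) * Real.log 2) (1 + (t : ℝ) * Real.log (m : ℝ))) + 1 := by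
  have htn : t ≤ n := htm.trans hmn
  have hB0 : (0:ℝ) < (m.choose t : ℝ) := by exact_mod_cast Nat.choose_pos htm
  have hB1 : (1:ℝ) ≤ (m.choose t : ℝ) := by exact_mod_cast Nat.choose_pos htm
  have hN0 : (0:ℝ) < (n.choose t : ℝ) := by exact_mod_cast Nat.choose_pos htn
  have hBN : (m.choose t : ℝ) ≤ (n.choose t : ℝ) := by
    exact_mod_cast Nat.choose_le_choose t hmn
  set B : ℝ := (m.choose t : ℝ) with hBdef
  set N : ℝ := (n.choose t : ℝ) with hNdef
  set p : ℝ := B / N with hpdef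
  have hp0 : 0 < p := div_pos hB0 hN0
  have hp1 : p ≤ 1 := div_le_one_of_le₀ hBN hN0.le
  set x : ℝ := Real.log B / p with hxdef
  have hlogB0 : 0 ≤ Real.log B := Real.log_nonneg hB1
  have hx0 : 0 ≤ x := div_nonneg hlogB0 hp0.le
  set k : ℕ := ⌈x⌉₊ with hkdef
  set y : ℝ := N * (1 - p) ^ k with hydef
  have h1p0 : (0:ℝ) ≤ 1 - p := by linarith
  have hy0 : 0 ≤ y := mul_nonneg hN0.le (pow_nonneg h1p0 k)
  set r : ℕ := ⌈y⌉₊ with hrdef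
  have hry : (r : ℝ) < y + 1 := Nat.ceil_lt_add_one hy0
  have hcovle : (coveringNumber n m t : ℝ) ≤ (k : ℝ) + (r : ℝ) := by
    have h := coveringNumber_le htm hmn k r (Nat.le_ceil y)
    exact_mod_cast Nat.cast_le.2 h
  have hxk : x ≤ (k : ℝ) := Nat.le_ceil x
  have hkx : (k : ℝ) < x + 1 := Nat.ceil_lt_add_one hx0
  set δ : ℝ := (k : ℝ) - x with hδdef
  have hδ0 : 0 ≤ δ := by simp only [hδdef]; linarith
  have hδ1 : δ ≤ 1 := by simp only [hδdef]; linarith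
  set u : ℝ := p * δ with hudef
  have hu0 : 0 ≤ u := mul_nonneg hp0.le hδ0
  have hup : u ≤ p := by rw [hudef]; nlinarith [hδ1, hp0.le]
  have hu1 : u ≤ 1 := hup.trans hp1
  clear_value B N p x k y r δ u
  -- y ≤ (1/p) * exp (-u)
  have hexpk : (1 - p) ^ k ≤ Real.exp (-(p * k)) := by
    calc (1 - p) ^ k ≤ Real.exp (-p) ^ k :=
          pow_le_pow_left₀ h1p0 (Real.one_sub_le_exp_neg p) k
      _ = Real.exp (-(p * k)) := by rw [← Real.exp_nat_mul]; congr 1; ring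
  have hpk : p * (k : ℝ) = Real.log B + u := by
    have hk : (k : ℝ) = x + δ := by rw [hδdef]; ring
    rw [hk, mul_add, ← hudef, hxdef, mul_div_cancel₀ _ hp0.ne']
  have hy_le : y ≤ (1/p) * Real.exp (-u) := by
    rw [hydef]
    calc N * (1 - p) ^ k ≤ N * Real.exp (-(p * k)) := mul_le_mul_of_nonneg_left hexpk hN0.le
      _ = N * (Real.exp (-(Real.log B)) * Real.exp (-u)) := by
          rw [← Real.exp_add, hpk]; congr 1; ring
      _ = (1/p) * Real.exp (-u) := by
          rw [Real.exp_neg, Real.exp_log hB0, hpdef, one_div_div]; ring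
  -- quadratic bound
  have hquad : Real.exp (-u) ≤ 1 - u + u^2/2 := by
    have hexp := Real.quadratic_le_exp_of_nonneg hu0
    have hD : (0:ℝ) < 1 + u + u^2/2 := by positivity
    have h1 : Real.exp (-u) ≤ (1 + u + u^2/2)⁻¹ := by
      rw [Real.exp_neg]
      exact inv_anti₀ hD hexp
    have h2 : (1 + u + u^2/2)⁻¹ ≤ 1 - u + u^2/2 := by
      rw [inv_eq_one_div, div_le_iff₀ hD]
      nlinarith [sq_nonneg (u*u)]
    linarith
  -- k + r < (1/p)(log B + 3/2) + 1
  have hkr : (k : ℝ) + (r : ℝ) < (1/p) * (Real.log B + 3/2) + 1 := by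
    have hδu : δ = u / p := by rw [hudef, mul_comm, mul_div_cancel_right₀ _ hp0.ne']
    have hu2 : u^2 ≤ 1 := by rw [sq]; exact mul_le_one₀ hu1 hu0 hu1
    have hsum : u + Real.exp (-u) ≤ 3/2 := by linarith
    have hfrac : δ + (1/p) * Real.exp (-u) ≤ (1/p) * (3/2) := by
      have heq : δ + (1/p) * Real.exp (-u) = (1/p) * (u + Real.exp (-u)) := by
        rw [hδu]; field_simp
      rw [heq]
      exact mul_le_mul_of_nonneg_left hsum (by positivity)
    have hxeq : x = (1/p) * Real.log B := by rw [hxdef]; ring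
    have hkeq : (k : ℝ) = x + δ := by rw [hδdef]; ring
    linarith [hry, hy_le, hfrac, hxeq, hkeq]
  -- final comparison
  have htm' : (t:ℝ) ≤ (m:ℝ) := by exact_mod_cast htm
  have htn' : (t:ℝ) ≤ (n:ℝ) := by exact_mod_cast htn
  have hm0 : (0:ℝ) ≤ (m:ℝ) := by positivity
  have hQ0 : (0:ℝ) ≤ (n : ℝ) / (m : ℝ) * (((n : ℝ) - (t : ℝ) + 1) / ((m : ℝ) - (t : ℝ) + 1)) := by
    apply mul_nonneg (by positivity)
    apply div_nonneg <;> linarith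
  have hQrp0 : (0:ℝ) ≤ ((n : ℝ) / (m : ℝ) * (((n : ℝ) - (t : ℝ) + 1) / ((m : ℝ) - (t : ℝ) + 1)))
      ^ ((t : ℝ) / 2) := Real.rpow_nonneg hQ0 _
  have hratio := choose_ratio_le ht htm hmn
  have hlogmin := log_choose_bounds ht htm
  rw [← hNdef, ← hBdef] at hratio
  rw [← hBdef] at hlogmin
  have h1p : 1/p = N / B := by rw [hpdef, one_div_div]
  have hmono : (1/p) * (Real.log B + 3/2) ≤
      ((n : ℝ) / (m : ℝ) * (((n : ℝ) - (t : ℝ) + 1) / ((m : ℝ) - (t : ℝ) + 1))) ^ ((t : ℝ) / 2) *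
        min (1 + (t : ℝ) + (t : ℝ) * Real.log ((m : ℝ) / (t : ℝ)))
          (min (1 + (m : ℝ) * Real.log 2) (1 + (t : ℝ) * Real.log (m : ℝ))) := by
    rw [h1p]
    exact mul_le_mul hratio hlogmin (by linarith) hQrp0
  linarith [hcovle, hkr, hmono]
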